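/- Fix an integer n ≥ 2 and let H be the 6n × (4n²−2n) block–point incidence matrix of the construction, viewed over GF(2). Then the rank of H over GF(2) is at most 6n − 2. -/

import Mathlib

def xfun (n j : ℕ) : ℕ := if j < n then 2 * j + 1 else 2 * (j - n)

def Blk (n j a : ℕ) : Finset ℕ :=
  {a, (j + a) % (2 * n) + 2 * n, (xfun n j + a) % (2 * n) + 4 * n}

abbrev ColIdx (n : ℕ) := {p : Fin (2 * n) × Fin (2 * n) // (p.1 : ℕ) ≠ n}

def Hmat (n : ℕ) : Matrix (Fin (6 * n)) (ColIdx n) (ZMod 2) :=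
  fun i p => if (i : ℕ) ∈ Blk n (p.1.1 : ℕ) (p.1.2 : ℕ) then 1 else 0

open Finset Module LinearMap

def Lmap (n : ℕ) : (Fin (6*n) → ZMod 2) →ₗ[ZMod 2] (ZMod 2 × ZMod 2) where
  toFun v := (∑ i ∈ Finset.univ.filter (fun i : Fin (6*n) => (i:ℕ) < 4*n), v i,
              ∑ i ∈ Finset.univ.filter (fun i : Fin (6*n) => (i:ℕ) < 2*n ∨ 4*n ≤ (i:ℕ)), v i)
  map_add' u v := by simp [Finset.sum_add_distrib, Prod.ext_iff]
  map_smul' c v := by simp [Finset.mul_sum, Prod.ext_iff]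

lemma Lmap_surj (n : ℕ) (hn : 2 ≤ n) : Function.Surjective (Lmap n) := by
  rintro ⟨x, y⟩
  refine ⟨Pi.single (⟨2*n, by omega⟩ : Fin (6*n)) x +
          Pi.single (⟨4*n, by omega⟩ : Fin (6*n)) y, ?_⟩
  simp only [Lmap, LinearMap.coe_mk, AddHom.coe_mk, Pi.add_apply,
    Finset.sum_add_distrib, Finset.sum_pi_single', Finset.mem_filter, Finset.mem_univ,
    true_and]
  norm_num
  constructor <;> [skip; skip] <;> omega

lemma sum_two (m : ℕ) (P : Fin m → Prop) [DecidablePred P] (x y : Fin m) (hxy : x ≠ y)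
    (h : ∀ i, P i ↔ i = x ∨ i = y) :
    (∑ i : Fin m, if P i then (1 : ZMod 2) else 0) = 0 := by
  simp only [h]
  rw [Finset.sum_boole]
  have hf : Finset.univ.filter (fun i : Fin m => i = x ∨ i = y) = {x, y} := by
    ext i; simp
  rw [hf, Finset.card_insert_of_notMem (by simp [hxy]), Finset.card_singleton]
  rfl

lemma col_ker (n : ℕ) (hn : 2 ≤ n) (p : ColIdx n) :
    (fun i => Hmat n i p) ∈ LinearMap.ker (Lmap n) := by
  have h2n : 0 < 2 * n := by omega
  set j := (p.1.1 : ℕ)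
  set a := (p.1.2 : ℕ)
  have ha : a < 2 * n := p.1.2.2
  set b := (j + a) % (2 * n) + 2 * n with hbdef
  set c := (xfun n j + a) % (2 * n) + 4 * n with hcdef
  have hb1 : 2 * n ≤ b := by omega
  have hb2 : b < 4 * n := by
    have := Nat.mod_lt (j + a) h2n; omega
  have hc1 : 4 * n ≤ c := by omega
  have hc2 : c < 6 * n := by
    have := Nat.mod_lt (xfun n j + a) h2n; omega
  have hmem : ∀ i : ℕ, i ∈ Blk n j a ↔ i = a ∨ i = b ∨ i = c := by
    intro i; simp [Blk, ← hbdef, ← hcdef]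
  rw [LinearMap.mem_ker]
  have hHcol : ∀ i : Fin (6*n), Hmat n i p = if ((i:ℕ) = a ∨ (i:ℕ) = b ∨ (i:ℕ) = c) then 1 else 0 := by
    intro i; simp only [Hmat]; exact if_congr (hmem i) rfl rfl
  simp only [Lmap, LinearMap.coe_mk, AddHom.coe_mk]
  rw [Prod.mk_eq_zero]
  constructor
  · rw [Finset.sum_congr rfl (fun i _ => hHcol i), Finset.sum_filter]
    simp only [← ite_and]
    exact sum_two _ _ ⟨a, by omega⟩ ⟨b, by omega⟩
      (by simp only [ne_eq, Fin.mk.injEq]; omega)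
      (fun i => by simp only [Fin.ext_iff]; omega)
  · rw [Finset.sum_congr rfl (fun i _ => hHcol i), Finset.sum_filter]
    simp only [← ite_and]
    exact sum_two _ _ ⟨a, by omega⟩ ⟨c, by omega⟩
      (by simp only [ne_eq, Fin.mk.injEq]; omega)
      (fun i => by simp only [Fin.ext_iff]; omega)

theorem stmt9 (n : ℕ) (hn : 2 ≤ n) :
    (Hmat n).rank ≤ 6 * n - 2 := by
  have hker : LinearMap.range (Hmat n).mulVecLin ≤ LinearMap.ker (Lmap n) := by
    rw [Matrix.range_mulVecLin, Submodule.span_le]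
    rintro _ ⟨p, rfl⟩
    exact col_ker n hn p
  have h1 : (Hmat n).rank ≤ finrank (ZMod 2) (LinearMap.ker (Lmap n)) :=
    Submodule.finrank_mono hker
  have h2 : finrank (ZMod 2) (LinearMap.range (Lmap n)) +
      finrank (ZMod 2) (LinearMap.ker (Lmap n)) = 6 * n := by
    rw [LinearMap.finrank_range_add_finrank_ker]
    simp [Module.finrank_fintype_fun_eq_card]
  have h3 : finrank (ZMod 2) (LinearMap.range (Lmap n)) = 2 := by
    rw [LinearMap.range_eq_top.mpr (Lmap_surj n hn), finrank_top]
    simp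
  omega
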